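/- Let R be a commutative ring and let K(R) denote the bounded distributive lattice of quasi-compact open subsets of Spec R (ordered by inclusion, with finite unions and intersections). Then the map D : R → K(R) sending f to the basic open D(f) is a universal support: for every bounded distributive lattice L and every map d : R → L satisfying d(0) = ⊥, d(1) = ⊤, d(xy) = d(x) ⊓ d(y) for all x, y, and d(x+y) ≤ d(x) ⊔ d(y) for all x, y, there is a unique homomorphism of bounded lattices φ : K(R) → L with φ(D(f)) = d(f) for all f : R. -/

import Mathlib

/-!
STATEMENT 17: Universal property of the Zariski lattice.  For a commutative
ring `R`, the bounded distributive lattice `K(R)` of quasi-compact open subsets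
of `Spec R` together with the map `D : R → K(R)`, `f ↦ D(f)`, is the universal
support: every support `d : R → L` into a bounded distributive lattice factors
uniquely through `D` via a bounded lattice homomorphism.
-/

open TopologicalSpace

universe u v

/-- The prime spectrum of a commutative ring is quasi-separated. -/
instance PrimeSpectrum.instQuasiSeparatedSpace' (R : Type u) [CommRing R] :
    QuasiSeparatedSpace (PrimeSpectrum R) :=
  inferInstanceAs (QuasiSeparatedSpace (AlgebraicGeometry.Spec (CommRingCat.of R)))

/-- The compact opens of a quasi-separated space form a lattice. -/
instance CompactOpens.instLattice (α : Type*) [TopologicalSpace α] [QuasiSeparatedSpace α] :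
    Lattice (CompactOpens α) :=
  SetLike.coe_injective.lattice _ .rfl .rfl CompactOpens.coe_sup CompactOpens.coe_inf

/-- The basic open `D(f)` as a compact open of `Spec R`; this is the universal
support into the Zariski lattice of `R`. -/
def primeSpectrumD {R : Type u} [CommRing R] (f : R) :
    CompactOpens (PrimeSpectrum R) :=
  ⟨⟨(PrimeSpectrum.basicOpen f : Set (PrimeSpectrum R)),
      PrimeSpectrum.isCompact_basicOpen f⟩,
    (PrimeSpectrum.basicOpen f).isOpen⟩

section Aux

open PrimeSpectrum

variable {R : Type u} [CommRing R]
    {L : Type v} [DistribLattice L] [BoundedOrder L]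
    (d : R → L) (h0 : d 0 = ⊥) (h1 : d 1 = ⊤)
    (hmul : ∀ x y, d (x * y) = d x ⊓ d y)
    (hadd : ∀ x y, d (x + y) ≤ d x ⊔ d y)

include h0 hadd in
lemma zar_d_sum_le {ι : Type*} (s : Finset ι) (g : ι → R) :
    d (∑ i ∈ s, g i) ≤ s.sup fun i => d (g i) := by
  classical
  induction s using Finset.induction with
  | empty => simp [h0]
  | insert a s hnot ih =>
    rw [Finset.sum_insert hnot, Finset.sup_insert]
    exact (hadd _ _).trans (sup_le_sup le_rfl ih)

include h0 hmul hadd in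
lemma zar_d_mem_span_le (t : Finset R) {x : R} (hx : x ∈ Ideal.span (t : Set R)) :
    d x ≤ t.sup d := by
  classical
  obtain ⟨f, -, rfl⟩ := Submodule.mem_span_finset.mp hx
  refine (zar_d_sum_le d h0 hadd t _).trans (Finset.sup_mono_fun fun i _ => ?_)
  rw [smul_eq_mul, hmul]
  exact inf_le_right

include h0 h1 hmul hadd in
lemma zar_d_key (f : R) (t : Finset R)
    (hf : (basicOpen f : Set (PrimeSpectrum R)) ⊆ (zeroLocus (t : Set R))ᶜ) :
    d f ≤ t.sup d := by
  have hrad : f ∈ (Ideal.span (t : Set R)).radical := by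
    have h1' : zeroLocus (Ideal.span (t : Set R) : Set R) ⊆
        zeroLocus (Ideal.span {f} : Set R) := by
      rw [zeroLocus_span, zeroLocus_span]
      intro x hx
      rw [mem_zeroLocus, Set.singleton_subset_iff]
      by_contra hfx
      exact (hf (by rwa [SetLike.mem_coe, mem_basicOpen])) hx
    have := (zeroLocus_subset_zeroLocus_iff _ _).mp h1'
    exact this (Ideal.mem_span_singleton_self f)
  obtain ⟨n, hn⟩ := hrad
  have hle : ∀ m : ℕ, d f ≤ d (f ^ m) := by
    intro m
    induction m with
    | zero => simp [h1]
    | succ k ih =>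
      rw [pow_succ, hmul]
      exact le_inf ih le_rfl
  exact (hle n).trans (zar_d_mem_span_le d h0 hmul hadd t hn)

include h0 h1 hmul hadd in
lemma zar_sup_le_sup (s t : Finset R)
    (h : (zeroLocus (s : Set R))ᶜ ⊆ (zeroLocus (t : Set R))ᶜ) :
    s.sup d ≤ t.sup d := by
  refine Finset.sup_le fun f hf => zar_d_key d h0 h1 hmul hadd f t (fun x hx => h ?_)
  rw [SetLike.mem_coe, mem_basicOpen] at hx
  simp only [Set.mem_compl_iff, mem_zeroLocus]
  exact fun hsub => hx (hsub hf)

/-- A finset representation of a compact open of `Spec R`. -/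
noncomputable def zarRep (U : CompactOpens (PrimeSpectrum R)) : Finset R :=
  (isCompact_isOpen_iff.mp ⟨U.isCompact, U.isOpen⟩).choose

lemma zarRep_spec (U : CompactOpens (PrimeSpectrum R)) :
    (zeroLocus ((zarRep U : Finset R) : Set R))ᶜ = (U : Set (PrimeSpectrum R)) :=
  (isCompact_isOpen_iff.mp ⟨U.isCompact, U.isOpen⟩).choose_spec

include h0 h1 hmul hadd in
lemma zarPhi_eq (U : CompactOpens (PrimeSpectrum R)) (s : Finset R)
    (hs : (zeroLocus (s : Set R))ᶜ = (U : Set (PrimeSpectrum R))) :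
    (zarRep U).sup d = s.sup d := by
  have h1' := zar_sup_le_sup d h0 h1 hmul hadd (zarRep U) s
    (by rw [zarRep_spec, hs])
  have h2' := zar_sup_le_sup d h0 h1 hmul hadd s (zarRep U)
    (by rw [zarRep_spec, hs])
  exact le_antisymm h1' h2'

lemma zar_coe_finset_sup_D (s : Finset R) :
    ((s.sup primeSpectrumD : CompactOpens (PrimeSpectrum R)) : Set (PrimeSpectrum R)) =
      (zeroLocus (s : Set R))ᶜ := by
  classical
  induction s using Finset.induction with
  | empty => simp [zeroLocus_empty]
  | insert a s hnot ih =>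
    rw [Finset.sup_insert, CompactOpens.coe_sup, ih, Finset.coe_insert,
      Set.insert_eq, zeroLocus_union, Set.compl_inter]
    congr 1
    rw [← basicOpen_eq_zeroLocus_compl]
    rfl

end Aux

theorem zariski_lattice_universal_property {R : Type u} [CommRing R]
    {L : Type v} [DistribLattice L] [BoundedOrder L]
    (d : R → L) (h0 : d 0 = ⊥) (h1 : d 1 = ⊤)
    (hmul : ∀ x y, d (x * y) = d x ⊓ d y)
    (hadd : ∀ x y, d (x + y) ≤ d x ⊔ d y) :
    ∃! φ : BoundedLatticeHom (CompactOpens (PrimeSpectrum R)) L,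
      ∀ f : R, φ (primeSpectrumD f) = d f := by
  classical
  set φf : CompactOpens (PrimeSpectrum R) → L := fun U => (zarRep U).sup d with hφf
  have key : ∀ (U : CompactOpens (PrimeSpectrum R)) (s : Finset R),
      (PrimeSpectrum.zeroLocus (s : Set R))ᶜ = (U : Set (PrimeSpectrum R)) →
        φf U = s.sup d := fun U s hs => zarPhi_eq d h0 h1 hmul hadd U s hs
  have hD : ∀ f : R, φf (primeSpectrumD f) = d f := by
    intro f
    rw [key (primeSpectrumD f) {f}
      (by rw [Finset.coe_singleton, ← PrimeSpectrum.basicOpen_eq_zeroLocus_compl]; rfl),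
      Finset.sup_singleton]
  refine ⟨{ toFun := φf
            map_sup' := ?_
            map_inf' := ?_
            map_top' := ?_
            map_bot' := ?_ }, hD, ?_⟩
  · -- map_sup
    intro U V
    show φf (U ⊔ V) = φf U ⊔ φf V
    have hrep : (PrimeSpectrum.zeroLocus ((↑(zarRep U ∪ zarRep V) : Set R)))ᶜ
        = ((U ⊔ V : CompactOpens (PrimeSpectrum R)) : Set (PrimeSpectrum R)) := by
      rw [Finset.coe_union, PrimeSpectrum.zeroLocus_union, Set.compl_inter,
        zarRep_spec, zarRep_spec, CompactOpens.coe_sup]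
    rw [key (U ⊔ V) _ hrep, Finset.sup_union]
  · -- map_inf
    intro U V
    show φf (U ⊓ V) = φf U ⊓ φf V
    have hrep : (PrimeSpectrum.zeroLocus
        ((((zarRep U ×ˢ zarRep V).image fun p => p.1 * p.2 : Finset R)) : Set R))ᶜ
        = ((U ⊓ V : CompactOpens (PrimeSpectrum R)) : Set (PrimeSpectrum R)) := by
      rw [CompactOpens.coe_inf, ← zarRep_spec U, ← zarRep_spec V]
      ext x
      simp only [Set.mem_compl_iff, Set.mem_inter_iff, PrimeSpectrum.mem_zeroLocus]
      constructor
      · intro h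
        obtain ⟨a, ha, hanot⟩ := Set.not_subset.mp h
        rw [Finset.mem_coe, Finset.mem_image] at ha
        obtain ⟨q, hq, rfl⟩ := ha
        rw [Finset.mem_product] at hq
        have h1' : q.1 ∉ x.asIdeal := fun h' => hanot (Ideal.mul_mem_right _ _ h')
        have h2' : q.2 ∉ x.asIdeal := fun h' => hanot (Ideal.mul_mem_left _ _ h')
        exact ⟨fun hs => h1' (hs hq.1), fun ht => h2' (ht hq.2)⟩
      · rintro ⟨hU', hV'⟩
        obtain ⟨a, ha, hanot⟩ := Set.not_subset.mp hU'
        obtain ⟨b, hb, hbnot⟩ := Set.not_subset.mp hV'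
        refine Set.not_subset.mpr ⟨a * b, ?_, ?_⟩
        · rw [Finset.mem_coe, Finset.mem_image]
          exact ⟨(a, b), Finset.mem_product.mpr ⟨ha, hb⟩, rfl⟩
        · intro hmem
          rcases x.isPrime.mem_or_mem hmem with h | h
          · exact hanot h
          · exact hbnot h
    rw [key (U ⊓ V) _ hrep, Finset.sup_image]
    calc (zarRep U ×ˢ zarRep V).sup (d ∘ fun p => p.1 * p.2)
        = (zarRep U ×ˢ zarRep V).sup fun p => d p.1 ⊓ d p.2 :=
          Finset.sup_congr rfl fun p _ => hmul p.1 p.2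
      _ = (zarRep U).sup d ⊓ (zarRep V).sup d := (Finset.sup_inf_sup _ _ _ _).symm
  · -- map_top
    show φf ⊤ = ⊤
    have hrep : (PrimeSpectrum.zeroLocus ((↑({1} : Finset R)) : Set R))ᶜ
        = ((⊤ : CompactOpens (PrimeSpectrum R)) : Set (PrimeSpectrum R)) := by
      rw [Finset.coe_singleton, PrimeSpectrum.zeroLocus_singleton_one, Set.compl_empty,
        CompactOpens.coe_top]
    rw [key ⊤ _ hrep, Finset.sup_singleton, h1]
  · -- map_bot
    show φf ⊥ = ⊥
    have hrep : (PrimeSpectrum.zeroLocus ((↑(∅ : Finset R)) : Set R))ᶜ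
        = ((⊥ : CompactOpens (PrimeSpectrum R)) : Set (PrimeSpectrum R)) := by
      rw [Finset.coe_empty, PrimeSpectrum.zeroLocus_empty, Set.compl_univ,
        CompactOpens.coe_bot]
    rw [key ⊥ _ hrep, Finset.sup_empty]
  · -- uniqueness
    intro ψ hψ
    ext U
    have hU : U = (zarRep U).sup primeSpectrumD :=
      SetLike.coe_injective (by rw [zar_coe_finset_sup_D, zarRep_spec])
    calc ψ U = ψ ((zarRep U).sup primeSpectrumD) := by rw [← hU]
      _ = (zarRep U).sup fun f => ψ (primeSpectrumD f) := map_finset_sup ψ _ _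
      _ = (zarRep U).sup d := Finset.sup_congr rfl fun f _ => hψ f
      _ = φf U := rfl
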